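/- In the 5-dimensional coordinate space with coordinates (p, q, r, φ, α), α ∉ (π/2)ℤ, consider the vector fields ν = ∂/∂α, ξ = ∂/∂φ − q ∂/∂p + (p − r·cot α) ∂/∂q, η = tan α · ∂/∂p − ∂/∂r. Then [ν, ξ] = (r/sin²α) ∂/∂q and [ν, η] = (1/cos²α) ∂/∂p; consequently, at every point with r ≠ 0 the five vectors ν, ξ, η, [ν,ξ], [ν,η] are linearly independent and span the tangent space. -/

import Mathlib

open Real

/-- Coordinates `(p, q, r, φ, α)` on the 5-dimensional configuration space. -/
abbrev Conf5 : Type := Fin 5 → ℝ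

/-- Lie bracket of vector fields, `[X,Y](x) = DY_x(X(x)) - DX_x(Y(x))`. -/
noncomputable def lieBr (X Y : Conf5 → Conf5) (x : Conf5) : Conf5 :=
  fderiv ℝ Y x (X x) - fderiv ℝ X x (Y x)

/-- The vector field ν = ∂/∂α. -/
noncomputable def nuF : Conf5 → Conf5 := fun _ => ![0, 0, 0, 0, 1]

/-- The vector field ξ = ∂/∂φ − q ∂/∂p + (p − r cot α) ∂/∂q. -/
noncomputable def xiF : Conf5 → Conf5 := fun x =>
  ![-(x 1), x 0 - x 2 * (Real.cos (x 4) / Real.sin (x 4)), 0, 1, 0]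

/-- The vector field η = tan α ∂/∂p − ∂/∂r. -/
noncomputable def etaF : Conf5 → Conf5 := fun x =>
  ![Real.tan (x 4), 0, -1, 0, 0]

open ContinuousLinearMap in
/-- Explicit derivative of ξ. -/
noncomputable def xiD (x : Conf5) : Conf5 →L[ℝ] Conf5 :=
  ContinuousLinearMap.pi
    ![-(proj 1), proj 0 - ((x 2) • ((-1 / Real.sin (x 4) ^ 2) • proj 4)
        + (Real.cos (x 4) / Real.sin (x 4)) • proj 2), 0, 0, 0]

open ContinuousLinearMap in
lemma hasFDerivAt_xiF (x : Conf5) (hs : Real.sin (x 4) ≠ 0) :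
    HasFDerivAt xiF (xiD x) x := by
  rw [hasFDerivAt_pi']
  intro i
  have h4 : HasFDerivAt (fun v : Conf5 => v 4) (proj 4 : Conf5 →L[ℝ] ℝ) x :=
    hasFDerivAt_apply 4 x
  fin_cases i <;> rw [xiD, proj_pi]
  · exact (hasFDerivAt_apply 1 x).neg
  · have hcot : HasDerivAt (fun t => Real.cos t / Real.sin t)
        (-1 / Real.sin (x 4) ^ 2) (x 4) := by
      have := (Real.hasDerivAt_cos (x 4)).div (Real.hasDerivAt_sin (x 4)) hs
      refine this.congr_deriv ?_
      have h1 : Real.sin (x 4) ^ 2 + Real.cos (x 4) ^ 2 = 1 := Real.sin_sq_add_cos_sq _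
      field_simp
      nlinarith [h1]
    have hcomp : HasFDerivAt (fun v : Conf5 => Real.cos (v 4) / Real.sin (v 4))
        ((-1 / Real.sin (x 4) ^ 2) • (proj 4 : Conf5 →L[ℝ] ℝ)) x :=
      by exact hcot.comp_hasFDerivAt x h4
    have hmul := (hasFDerivAt_apply (𝕜 := ℝ) 2 x).mul hcomp
    exact (hasFDerivAt_apply (𝕜 := ℝ) 0 x).sub hmul
  · exact hasFDerivAt_const 0 x
  · exact hasFDerivAt_const 1 x
  · exact hasFDerivAt_const 0 x

open ContinuousLinearMap in
/-- Explicit derivative of η. -/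
noncomputable def etaD (x : Conf5) : Conf5 →L[ℝ] Conf5 :=
  ContinuousLinearMap.pi
    ![(1 / Real.cos (x 4) ^ 2) • proj 4, 0, 0, 0, 0]

open ContinuousLinearMap in
lemma hasFDerivAt_etaF (x : Conf5) (hc : Real.cos (x 4) ≠ 0) :
    HasFDerivAt etaF (etaD x) x := by
  rw [hasFDerivAt_pi']
  intro i
  fin_cases i <;> rw [etaD, proj_pi]
  · exact (Real.hasDerivAt_tan hc).comp_hasFDerivAt x (hasFDerivAt_apply (𝕜 := ℝ) 4 x)
  · exact hasFDerivAt_const 0 x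
  · exact hasFDerivAt_const (-1) x
  · exact hasFDerivAt_const 0 x
  · exact hasFDerivAt_const 0 x

lemma lieBr_nu_xi (x : Conf5) (hs : Real.sin (x 4) ≠ 0) :
    lieBr nuF xiF x = ![0, x 2 / (Real.sin (x 4)) ^ 2, 0, 0, 0] := by
  have hnu : fderiv ℝ nuF x = 0 := fderiv_const_apply _
  rw [lieBr, hnu, (hasFDerivAt_xiF x hs).fderiv]
  funext i
  fin_cases i <;>
    simp [xiD, nuF, ContinuousLinearMap.pi_apply, ContinuousLinearMap.proj_apply] <;>
    field_simp

lemma lieBr_nu_eta (x : Conf5) (hc : Real.cos (x 4) ≠ 0) :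
    lieBr nuF etaF x = ![1 / (Real.cos (x 4)) ^ 2, 0, 0, 0, 0] := by
  have hnu : fderiv ℝ nuF x = 0 := fderiv_const_apply _
  rw [lieBr, hnu, (hasFDerivAt_etaF x hc).fderiv]
  funext i
  fin_cases i <;>
    simp [etaD, nuF, ContinuousLinearMap.pi_apply, ContinuousLinearMap.proj_apply]

theorem stmt15 (x : Conf5) (hs : Real.sin (x 4) ≠ 0) (hc : Real.cos (x 4) ≠ 0) :
    lieBr nuF xiF x = ![0, x 2 / (Real.sin (x 4)) ^ 2, 0, 0, 0] ∧
    lieBr nuF etaF x = ![1 / (Real.cos (x 4)) ^ 2, 0, 0, 0, 0] ∧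
    (x 2 ≠ 0 →
      LinearIndependent ℝ ![nuF x, xiF x, etaF x, lieBr nuF xiF x, lieBr nuF etaF x] ∧
      Submodule.span ℝ
        (Set.range ![nuF x, xiF x, etaF x, lieBr nuF xiF x, lieBr nuF etaF x]) = ⊤) := by
  refine ⟨lieBr_nu_xi x hs, lieBr_nu_eta x hc, fun hr => ?_⟩
  have hli : LinearIndependent ℝ
      ![nuF x, xiF x, etaF x, lieBr nuF xiF x, lieBr nuF etaF x] := by
    rw [Fintype.linearIndependent_iff]
    intro g hg
    rw [lieBr_nu_xi x hs, lieBr_nu_eta x hc] at hg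
    have h4 := congrFun hg 4
    have h3 := congrFun hg 3
    have h2 := congrFun hg 2
    have h1 := congrFun hg 1
    have h0 := congrFun hg 0
    simp [Fin.sum_univ_five, nuF, xiF, etaF, Matrix.vecHead, Matrix.vecTail]
      at h0 h1 h2 h3 h4
    have hg0 : g 0 = 0 := by linarith
    have hg1 : g 1 = 0 := by linarith
    have hg2 : g 2 = 0 := by linarith
    have hs2 : Real.sin (x 4) ^ 2 ≠ 0 := pow_ne_zero _ hs
    have hc2 : Real.cos (x 4) ^ 2 ≠ 0 := pow_ne_zero _ hc
    have hg3 : g 3 = 0 := by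
      rw [hg1] at h1
      field_simp [hr] at h1
      have h1' : g 3 * x 2 = 0 := by linear_combination h1
      exact (mul_eq_zero.1 h1').resolve_right hr
    have hg4 : g 4 = 0 := by
      rw [hg1, hg2] at h0
      field_simp at h0
      simpa using h0
    intro i
    fin_cases i <;> assumption
  refine ⟨hli, hli.span_eq_top_of_card_eq_finrank ?_⟩
  simp [Module.finrank_fin_fun]
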